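/- With notation as in the quaternion trace inequality, the bound is attained: if A = [I_r, 0] U^H and B = [I_r, 0] V^H where X = U Σ V^H is a QSVD of X, then A A^H = I_r, B B^H = I_r, and |tr(A X B^H)| = ∑_{i=1}^r σ_i(X). Consequently max over all such (A,B) of |tr(A X B^H)| equals ∑_{i=1}^r σ_i(X). -/

import Mathlib

open Matrix

local notation "H" => Quaternion ℝ

lemma sum_fin_eq_dite {K : ℕ} {α : Type*} [AddCommMonoid α] (n : ℕ) (f : Fin K → α) :
    (∑ j : Fin K, if (j : ℕ) = n then f j else 0) = if h : n < K then f ⟨n, h⟩ else 0 := by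
  split
  · next h =>
    rw [Finset.sum_eq_single ⟨n, h⟩]
    · simp
    · intro b _ hb
      rw [if_neg]
      simpa [Fin.ext_iff] using hb
    · simp
  · next h =>
    apply Finset.sum_eq_zero
    intro j _
    rw [if_neg]
    exact fun hj => h (hj ▸ j.2)

lemma sum_fin_eq_dite' {K : ℕ} {α : Type*} [AddCommMonoid α] (n : ℕ) (f : Fin K → α) :
    (∑ j : Fin K, if n = (j : ℕ) then f j else 0) = if h : n < K then f ⟨n, h⟩ else 0 := by
  rw [← sum_fin_eq_dite n f]
  refine Finset.sum_congr rfl fun j _ => ?_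
  by_cases h : n = (j:ℕ)
  · simp [h]
  · rw [if_neg h, if_neg (fun hc : (j:ℕ) = n => h hc.symm)]

lemma filter_range_lt {α : Type*} [AddCommMonoid α] (m N : ℕ) (f : ℕ → α) :
    (∑ t ∈ Finset.range N, if t < m then f t else 0) = ∑ t ∈ Finset.range (min m N), f t := by
  rw [← Finset.sum_filter]
  congr 1
  ext t
  simp only [Finset.mem_filter, Finset.mem_range, Finset.mem_range]
  omega

lemma pad_mul_padH {r K : ℕ} (h : r ≤ K) :
    (Matrix.of fun (i : Fin r) (j : Fin K) => if (i:ℕ) = (j:ℕ) then (1 : H) else 0) *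
    (Matrix.of fun (i : Fin r) (j : Fin K) => if (i:ℕ) = (j:ℕ) then (1 : H) else 0)ᴴ = 1 := by
  refine Matrix.ext fun i j => ?_
  simp only [Matrix.mul_apply, conjTranspose_apply, of_apply, apply_ite (star : H → H),
    star_one, star_zero, mul_ite, ite_mul, one_mul, mul_zero, zero_mul, mul_one]
  rw [sum_fin_eq_dite' (j:ℕ) (fun k => if (i:ℕ) = (k:ℕ) then (1:H) else 0)]
  rw [dif_pos (lt_of_lt_of_le j.2 h)]
  by_cases hij : i = j <;> simp [Matrix.one_apply, hij, Fin.ext_iff]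
  omega

lemma trace_PDQ {M N r : ℕ} (σ : ℕ → ℝ)
    (P : Matrix (Fin r) (Fin M) (Quaternion ℝ)) (Q : Matrix (Fin r) (Fin N) (Quaternion ℝ)) :
    Matrix.trace (P * (Matrix.of fun (i : Fin M) (j : Fin N) =>
      if (i : ℕ) = (j : ℕ) then ((σ (i:ℕ) : ℝ) : Quaternion ℝ) else 0) * Qᴴ)
    = ∑ t ∈ Finset.range (min M N), ((σ t : ℝ) : Quaternion ℝ) *
        ∑ i : Fin r, (if h : t < M then P i ⟨t, h⟩ else 0) *
          star (if h : t < N then Q i ⟨t, h⟩ else 0) := by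
  classical
  set g : Fin r → ℕ → H := fun i t =>
    (if h : t < M then P i ⟨t, h⟩ else 0) * ((σ t : ℝ) : H) *
      star (if h : t < N then Q i ⟨t, h⟩ else 0) with hg
  have step1 : Matrix.trace (P * (Matrix.of fun (i : Fin M) (j : Fin N) =>
      if (i : ℕ) = (j : ℕ) then ((σ (i:ℕ) : ℝ) : H) else 0) * Qᴴ)
      = ∑ i : Fin r, ∑ k : Fin N, g i (k : ℕ) := by
    simp only [Matrix.trace, Matrix.diag_apply, Matrix.mul_apply, conjTranspose_apply,
      Matrix.of_apply]
    refine Finset.sum_congr rfl fun i _ => Finset.sum_congr rfl fun k _ => ?_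
    have : (∑ j : Fin M, P i j * if (j:ℕ) = (k:ℕ) then ((σ (j:ℕ) : ℝ) : H) else 0)
        = if h : (k:ℕ) < M then P i ⟨(k:ℕ), h⟩ * ((σ (k:ℕ) : ℝ) : H) else 0 := by
      rw [← sum_fin_eq_dite (k:ℕ) (fun j => P i j * ((σ (j:ℕ) : ℝ) : H))]
      refine Finset.sum_congr rfl fun j _ => ?_
      by_cases h : (j:ℕ) = (k:ℕ)
      · simp [h]
      · simp [h]
    rw [this, hg]
    by_cases h : (k:ℕ) < M
    · simp only [dif_pos h, dif_pos k.2, Fin.eta]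
    · simp [dif_neg h]
  rw [step1]
  rw [Finset.sum_congr rfl fun i (_ : i ∈ Finset.univ) =>
    Fin.sum_univ_eq_sum_range (g i) N]
  have step2 : ∀ i : Fin r, (∑ t ∈ Finset.range N, g i t)
      = ∑ t ∈ Finset.range (min M N), g i t := by
    intro i
    rw [← filter_range_lt M N (g i)]
    refine Finset.sum_congr rfl fun t _ => ?_
    by_cases h : t < M
    · rw [if_pos h]
    · rw [if_neg h, hg]; simp [dif_neg h]
  rw [Finset.sum_congr rfl fun i (_ : i ∈ Finset.univ) => step2 i, Finset.sum_comm]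
  refine Finset.sum_congr rfl fun t _ => ?_
  rw [Finset.mul_sum]
  refine Finset.sum_congr rfl fun i _ => ?_
  rw [hg]
  simp only []
  rw [mul_assoc, ← mul_assoc, ← Quaternion.coe_commutes, mul_assoc]

lemma coe_sum {ι : Type*} (s : Finset ι) (f : ι → ℝ) :
    ((∑ x ∈ s, f x : ℝ) : Quaternion ℝ) = ∑ x ∈ s, ((f x : ℝ) : Quaternion ℝ) := by
  rw [← Quaternion.algebraMap_def]
  exact map_sum (algebraMap ℝ (Quaternion ℝ)) f s

lemma colsum_total {r K : ℕ} (P : Matrix (Fin r) (Fin K) (Quaternion ℝ)) (hP : P * Pᴴ = 1) :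
    ∑ t : Fin K, ∑ i : Fin r, Quaternion.normSq (P i t) = r := by
  have h1 : Matrix.trace (P * Pᴴ) = ((r : ℝ) : Quaternion ℝ) := by
    rw [hP, Matrix.trace_one, Quaternion.coe_natCast]
    simp
  have h2 : Matrix.trace (P * Pᴴ) =
      ((∑ t : Fin K, ∑ i : Fin r, Quaternion.normSq (P i t) : ℝ) : Quaternion ℝ) := by
    simp only [Matrix.trace, Matrix.diag_apply, Matrix.mul_apply, conjTranspose_apply,
      Quaternion.self_mul_star]
    rw [coe_sum, Finset.sum_comm]
    refine Finset.sum_congr rfl fun t _ => ?_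
    rw [coe_sum]
  exact Quaternion.coe_injective (h2.symm.trans h1)

lemma colsum_le_one {r K : ℕ} (P : Matrix (Fin r) (Fin K) (Quaternion ℝ)) (hP : P * Pᴴ = 1)
    (t : Fin K) : ∑ i : Fin r, Quaternion.normSq (P i t) ≤ 1 := by
  set G := Pᴴ * P with hG
  have hGH : Gᴴ = G := by rw [hG, conjTranspose_mul, conjTranspose_conjTranspose]
  have hGG : G * G = G := by
    rw [hG, Matrix.mul_assoc, ← Matrix.mul_assoc P Pᴴ P, hP, Matrix.one_mul]
  set α := ∑ i : Fin r, Quaternion.normSq (P i t) with hα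
  have hα0 : 0 ≤ α := Finset.sum_nonneg fun i _ => Quaternion.normSq_nonneg
  have hGtt : G t t = ((α : ℝ) : Quaternion ℝ) := by
    rw [hα, coe_sum, hG]
    simp only [Matrix.mul_apply, conjTranspose_apply, Quaternion.star_mul_self]
  have key : α = ∑ j : Fin K, Quaternion.normSq (G t j) := by
    have h1 : (G * G) t t = G t t := by rw [hGG]
    have h2 : (G * G) t t = ((∑ j : Fin K, Quaternion.normSq (G t j) : ℝ) : Quaternion ℝ) := by
      rw [Matrix.mul_apply, coe_sum]
      refine Finset.sum_congr rfl fun j _ => ?_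
      have : G j t = star (G t j) := by
        conv_lhs => rw [← hGH]
        rw [conjTranspose_apply]
      rw [this, Quaternion.self_mul_star]
    exact Quaternion.coe_injective ((hGtt.symm.trans h1.symm).trans h2)
  have hsingle : Quaternion.normSq (G t t) ≤ ∑ j : Fin K, Quaternion.normSq (G t j) :=
    Finset.single_le_sum (f := fun j => Quaternion.normSq (G t j))
      (fun j _ => Quaternion.normSq_nonneg) (Finset.mem_univ t)
  rw [hGtt, Quaternion.normSq_coe] at hsingle
  nlinarith [key ▸ hsingle]

lemma abel_bound (m r : ℕ) (hrm : r ≤ m) (σ c : ℕ → ℝ)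
    (hσ0 : ∀ i, 0 ≤ σ i) (hanti : ∀ i j : ℕ, i ≤ j → σ j ≤ σ i)
    (hc0 : ∀ t, 0 ≤ c t) (hc1 : ∀ t, c t ≤ 1)
    (hcs : ∑ t ∈ Finset.range m, c t ≤ (r : ℝ)) :
    ∑ t ∈ Finset.range m, σ t * c t ≤ ∑ t ∈ Finset.range r, σ t := by
  have hsplit : ∀ f : ℕ → ℝ, ∑ t ∈ Finset.range m, f t
      = ∑ t ∈ Finset.range r, f t + ∑ t ∈ Finset.Ico r m, f t := by
    intro f
    rw [Finset.range_eq_Ico, Finset.range_eq_Ico]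
    exact (Finset.sum_Ico_consecutive f (Nat.zero_le r) hrm).symm
  have h1 : ∑ t ∈ Finset.Ico r m, σ t * c t ≤ σ r * ∑ t ∈ Finset.Ico r m, c t := by
    rw [Finset.mul_sum]
    refine Finset.sum_le_sum fun t ht => ?_
    exact mul_le_mul_of_nonneg_right (hanti r t (Finset.mem_Ico.mp ht).1) (hc0 t)
  have h2 : ∑ t ∈ Finset.Ico r m, c t ≤ ∑ t ∈ Finset.range r, (1 - c t) := by
    have := hsplit c
    have hr' : (∑ t ∈ Finset.range r, (1 - c t)) = r - ∑ t ∈ Finset.range r, c t := by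
      rw [Finset.sum_sub_distrib, Finset.sum_const, Finset.card_range, nsmul_eq_mul, mul_one]
    rw [hr']
    linarith
  have h3 : σ r * ∑ t ∈ Finset.Ico r m, c t ≤ ∑ t ∈ Finset.range r, σ t * (1 - c t) := by
    calc σ r * ∑ t ∈ Finset.Ico r m, c t ≤ σ r * ∑ t ∈ Finset.range r, (1 - c t) :=
          mul_le_mul_of_nonneg_left h2 (hσ0 r)
      _ = ∑ t ∈ Finset.range r, σ r * (1 - c t) := Finset.mul_sum _ _ _
      _ ≤ ∑ t ∈ Finset.range r, σ t * (1 - c t) := by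
          refine Finset.sum_le_sum fun t ht => ?_
          have h1c : 0 ≤ 1 - c t := by linarith [hc1 t]
          exact mul_le_mul_of_nonneg_right
            (hanti t r (le_of_lt (Finset.mem_range.mp ht))) h1c
  have hfin : ∑ t ∈ Finset.range r, (σ t * c t + σ t * (1 - c t)) = ∑ t ∈ Finset.range r, σ t := by
    refine Finset.sum_congr rfl fun t _ => by ring
  rw [hsplit fun t => σ t * c t]
  have := Finset.sum_add_distrib (s := Finset.range r) (f := fun t => σ t * c t)
    (g := fun t => σ t * (1 - c t))
  linarith [h1.trans h3]

lemma upper_bound {M N r : ℕ} (hr : r ≤ min M N) (σ : ℕ → ℝ)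
    (hσ0 : ∀ i, 0 ≤ σ i) (hanti : ∀ i j : ℕ, i ≤ j → σ j ≤ σ i)
    (P : Matrix (Fin r) (Fin M) (Quaternion ℝ)) (Q : Matrix (Fin r) (Fin N) (Quaternion ℝ))
    (hP : P * Pᴴ = 1) (hQ : Q * Qᴴ = 1) :
    ‖Matrix.trace (P * (Matrix.of fun (i : Fin M) (j : Fin N) =>
      if (i : ℕ) = (j : ℕ) then ((σ (i:ℕ) : ℝ) : Quaternion ℝ) else 0) * Qᴴ)‖
      ≤ ∑ t ∈ Finset.range r, σ t := by
  classical
  rw [trace_PDQ]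
  set p : Fin r → ℕ → Quaternion ℝ := fun i t => if h : t < M then P i ⟨t, h⟩ else 0 with hp
  set q : Fin r → ℕ → Quaternion ℝ := fun i t => if h : t < N then Q i ⟨t, h⟩ else 0 with hq
  set c : ℕ → ℝ := fun t => ‖∑ i : Fin r, p i t * star (q i t)‖ with hc
  set α : ℕ → ℝ := fun t => ∑ i : Fin r, Quaternion.normSq (p i t) with hα
  set β : ℕ → ℝ := fun t => ∑ i : Fin r, Quaternion.normSq (q i t) with hβ
  have hα0 : ∀ t, 0 ≤ α t := fun t => Finset.sum_nonneg fun i _ => Quaternion.normSq_nonneg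
  have hβ0 : ∀ t, 0 ≤ β t := fun t => Finset.sum_nonneg fun i _ => Quaternion.normSq_nonneg
  have hα1 : ∀ t, α t ≤ 1 := by
    intro t
    by_cases h : t < M
    · have := colsum_le_one P hP ⟨t, h⟩
      simpa [hα, hp, dif_pos h] using this
    · simp [hα, hp, dif_neg h]
  have hβ1 : ∀ t, β t ≤ 1 := by
    intro t
    by_cases h : t < N
    · have := colsum_le_one Q hQ ⟨t, h⟩
      simpa [hβ, hq, dif_pos h] using this
    · simp [hβ, hq, dif_neg h]
  have hαsum : ∑ t ∈ Finset.range (min M N), α t ≤ (r : ℝ) := by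
    have h1 : ∑ t ∈ Finset.range (min M N), α t ≤ ∑ t ∈ Finset.range M, α t :=
      Finset.sum_le_sum_of_subset_of_nonneg
        (Finset.range_subset_range.mpr (min_le_left M N)) (fun t _ _ => hα0 t)
    have h2 : ∑ t ∈ Finset.range M, α t = (r : ℝ) := by
      rw [← Fin.sum_univ_eq_sum_range α M, ← colsum_total P hP]
      refine Finset.sum_congr rfl fun t _ => Finset.sum_congr rfl fun i _ => ?_
      rw [hp]; simp [dif_pos t.2]
    linarith
  have hβsum : ∑ t ∈ Finset.range (min M N), β t ≤ (r : ℝ) := by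
    have h1 : ∑ t ∈ Finset.range (min M N), β t ≤ ∑ t ∈ Finset.range N, β t :=
      Finset.sum_le_sum_of_subset_of_nonneg
        (Finset.range_subset_range.mpr (min_le_right M N)) (fun t _ _ => hβ0 t)
    have h2 : ∑ t ∈ Finset.range N, β t = (r : ℝ) := by
      rw [← Fin.sum_univ_eq_sum_range β N, ← colsum_total Q hQ]
      refine Finset.sum_congr rfl fun t _ => Finset.sum_congr rfl fun i _ => ?_
      rw [hq]; simp [dif_pos t.2]
    linarith
  have hc0 : ∀ t, 0 ≤ c t := fun t => norm_nonneg _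
  have hcab : ∀ t, c t ≤ Real.sqrt (α t) * Real.sqrt (β t) := by
    intro t
    have h1 : c t ≤ ∑ i : Fin r, ‖p i t‖ * ‖q i t‖ := by
      refine (norm_sum_le _ _).trans (Finset.sum_le_sum fun i _ => ?_)
      rw [norm_mul, norm_star]
    have h2 : ∑ i : Fin r, ‖p i t‖ * ‖q i t‖ ≤
        Real.sqrt (∑ i : Fin r, ‖p i t‖ ^ 2) * Real.sqrt (∑ i : Fin r, ‖q i t‖ ^ 2) :=
      Real.sum_mul_le_sqrt_mul_sqrt _ _ _
    have hα' : α t = ∑ i : Fin r, ‖p i t‖ ^ 2 := by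
      refine Finset.sum_congr rfl fun i _ => ?_
      rw [Quaternion.normSq_eq_norm_mul_self, sq]
    have hβ' : β t = ∑ i : Fin r, ‖q i t‖ ^ 2 := by
      refine Finset.sum_congr rfl fun i _ => ?_
      rw [Quaternion.normSq_eq_norm_mul_self, sq]
    rw [hα', hβ']
    exact h1.trans h2
  have hc1 : ∀ t, c t ≤ 1 := by
    intro t
    refine (hcab t).trans ?_
    have l1 : Real.sqrt (α t) ≤ 1 := by
      rw [show (1:ℝ) = Real.sqrt 1 by simp]
      exact Real.sqrt_le_sqrt (hα1 t)
    have l2 : Real.sqrt (β t) ≤ 1 := by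
      rw [show (1:ℝ) = Real.sqrt 1 by simp]
      exact Real.sqrt_le_sqrt (hβ1 t)
    calc Real.sqrt (α t) * Real.sqrt (β t) ≤ 1 * 1 :=
          mul_le_mul l1 l2 (Real.sqrt_nonneg _) zero_le_one
      _ = 1 := by ring
  have hcs : ∑ t ∈ Finset.range (min M N), c t ≤ (r : ℝ) := by
    have key : ∀ t, c t ≤ (α t + β t) / 2 := by
      intro t
      refine (hcab t).trans ?_
      nlinarith [sq_nonneg (Real.sqrt (α t) - Real.sqrt (β t)), Real.sq_sqrt (hα0 t),
        Real.sq_sqrt (hβ0 t), Real.sqrt_nonneg (α t), Real.sqrt_nonneg (β t)]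
    calc ∑ t ∈ Finset.range (min M N), c t
        ≤ ∑ t ∈ Finset.range (min M N), (α t + β t) / 2 :=
          Finset.sum_le_sum fun t _ => key t
      _ ≤ (r : ℝ) := by
          rw [show (fun t => (α t + β t)/2) = fun t => α t / 2 + β t / 2 by funext t; ring]
          rw [Finset.sum_add_distrib]
          have e1 : ∑ t ∈ Finset.range (min M N), α t / 2
              = (∑ t ∈ Finset.range (min M N), α t) / 2 := by
            rw [Finset.sum_div]
          have e2 : ∑ t ∈ Finset.range (min M N), β t / 2
              = (∑ t ∈ Finset.range (min M N), β t) / 2 := by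
            rw [Finset.sum_div]
          rw [e1, e2]; linarith
  have hnorm : ‖∑ t ∈ Finset.range (min M N), ((σ t : ℝ) : Quaternion ℝ) *
      ∑ i : Fin r, p i t * star (q i t)‖ ≤ ∑ t ∈ Finset.range (min M N), σ t * c t := by
    refine (norm_sum_le _ _).trans (Finset.sum_le_sum fun t _ => ?_)
    rw [norm_mul, Quaternion.norm_coe, Real.norm_eq_abs, abs_of_nonneg (hσ0 t)]
  exact hnorm.trans (abel_bound (min M N) r hr σ c hσ0 hanti hc0 hc1 hcs)

theorem quat_trace_inequality_attained {M N r : ℕ} (hr : r ≤ min M N)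
    (X : Matrix (Fin M) (Fin N) (Quaternion ℝ))
    (U : Matrix (Fin M) (Fin M) (Quaternion ℝ))
    (V : Matrix (Fin N) (Fin N) (Quaternion ℝ))
    (hU1 : U * Uᴴ = 1) (hU2 : Uᴴ * U = 1)
    (hV1 : V * Vᴴ = 1) (hV2 : Vᴴ * V = 1)
    (σ : ℕ → ℝ) (hσnonneg : ∀ i, 0 ≤ σ i)
    (hσanti : ∀ i j : ℕ, i ≤ j → σ j ≤ σ i)
    (hX : X = U * (Matrix.of fun (i : Fin M) (j : Fin N) =>
      if (i : ℕ) = (j : ℕ) then ((σ (i : ℕ) : ℝ) : Quaternion ℝ) else 0) * Vᴴ)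
    (A : Matrix (Fin r) (Fin M) (Quaternion ℝ))
    (B : Matrix (Fin r) (Fin N) (Quaternion ℝ))
    (hA : A = (Matrix.of fun (i : Fin r) (j : Fin M) =>
      if (i : ℕ) = (j : ℕ) then (1 : Quaternion ℝ) else 0) * Uᴴ)
    (hB : B = (Matrix.of fun (i : Fin r) (j : Fin N) =>
      if (i : ℕ) = (j : ℕ) then (1 : Quaternion ℝ) else 0) * Vᴴ) :
    A * Aᴴ = 1 ∧ B * Bᴴ = 1 ∧
    ‖Matrix.trace (A * X * Bᴴ)‖ = ∑ i ∈ Finset.range r, σ i ∧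
    IsGreatest {t : ℝ | ∃ (A' : Matrix (Fin r) (Fin M) (Quaternion ℝ))
        (B' : Matrix (Fin r) (Fin N) (Quaternion ℝ)),
        A' * A'ᴴ = 1 ∧ B' * B'ᴴ = 1 ∧ t = ‖Matrix.trace (A' * X * B'ᴴ)‖}
      (∑ i ∈ Finset.range r, σ i) := by
  classical
  have hrM : r ≤ M := hr.trans (min_le_left M N)
  have hrN : r ≤ N := hr.trans (min_le_right M N)
  set EM : Matrix (Fin r) (Fin M) (Quaternion ℝ) :=
    Matrix.of fun (i : Fin r) (j : Fin M) =>
      if (i : ℕ) = (j : ℕ) then (1 : Quaternion ℝ) else 0 with hEM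
  set EN : Matrix (Fin r) (Fin N) (Quaternion ℝ) :=
    Matrix.of fun (i : Fin r) (j : Fin N) =>
      if (i : ℕ) = (j : ℕ) then (1 : Quaternion ℝ) else 0 with hEN
  set D : Matrix (Fin M) (Fin N) (Quaternion ℝ) :=
    Matrix.of fun (i : Fin M) (j : Fin N) =>
      if (i : ℕ) = (j : ℕ) then ((σ (i : ℕ) : ℝ) : Quaternion ℝ) else 0 with hD
  have hAA : A * Aᴴ = 1 := by
    rw [hA, conjTranspose_mul, conjTranspose_conjTranspose, Matrix.mul_assoc,
      ← Matrix.mul_assoc Uᴴ U _, hU2, Matrix.one_mul]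
    exact pad_mul_padH hrM
  have hBB : B * Bᴴ = 1 := by
    rw [hB, conjTranspose_mul, conjTranspose_conjTranspose, Matrix.mul_assoc,
      ← Matrix.mul_assoc Vᴴ V _, hV2, Matrix.one_mul]
    exact pad_mul_padH hrN
  have hrw : ∀ (A' : Matrix (Fin r) (Fin M) (Quaternion ℝ))
      (B' : Matrix (Fin r) (Fin N) (Quaternion ℝ)),
      A' * X * B'ᴴ = (A' * U) * D * (B' * V)ᴴ := by
    intro A' B'
    rw [hX, conjTranspose_mul]
    simp only [Matrix.mul_assoc]
  have hAU : A * U = EM := by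
    rw [hA, Matrix.mul_assoc, hU2, Matrix.mul_one]
  have hBV : B * V = EN := by
    rw [hB, Matrix.mul_assoc, hV2, Matrix.mul_one]
  -- trace value
  have htrace : Matrix.trace (A * X * Bᴴ) = ((∑ i ∈ Finset.range r, σ i : ℝ) : Quaternion ℝ) := by
    rw [hrw A B, hAU, hBV, hD, trace_PDQ]
    have step : ∀ t ∈ Finset.range (min M N),
        ((σ t : ℝ) : Quaternion ℝ) * ∑ i : Fin r,
          (if h : t < M then EM i ⟨t, h⟩ else 0) * star (if h : t < N then EN i ⟨t, h⟩ else 0)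
        = if t < r then ((σ t : ℝ) : Quaternion ℝ) else 0 := by
      intro t ht
      rw [Finset.mem_range] at ht
      have htM : t < M := lt_of_lt_of_le ht (min_le_left M N)
      have htN : t < N := lt_of_lt_of_le ht (min_le_right M N)
      have inner : (∑ i : Fin r,
          (if h : t < M then EM i ⟨t, h⟩ else 0) * star (if h : t < N then EN i ⟨t, h⟩ else 0))
          = if h : t < r then (1 : Quaternion ℝ) else 0 := by
        rw [← sum_fin_eq_dite t (fun _ : Fin r => (1 : Quaternion ℝ))]
        refine Finset.sum_congr rfl fun i _ => ?_
        rw [dif_pos htM, dif_pos htN, hEM, hEN]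
        simp only [of_apply]
        by_cases h : (i : ℕ) = t
        · simp [h]
        · simp [h]
      rw [inner]
      by_cases h : t < r
      · rw [dif_pos h, if_pos h, mul_one]
      · rw [dif_neg h, if_neg h, mul_zero]
    rw [Finset.sum_congr rfl step, filter_range_lt r (min M N) (fun t => ((σ t : ℝ) : Quaternion ℝ)),
      min_eq_left hr, coe_sum]
  have hnormval : ‖Matrix.trace (A * X * Bᴴ)‖ = ∑ i ∈ Finset.range r, σ i := by
    rw [htrace, Quaternion.norm_coe, Real.norm_eq_abs,
      abs_of_nonneg (Finset.sum_nonneg fun i _ => hσnonneg i)]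
  refine ⟨hAA, hBB, hnormval, ⟨⟨A, B, hAA, hBB, hnormval.symm⟩, ?_⟩⟩
  rintro x ⟨A', B', hA', hB', rfl⟩
  rw [hrw A' B']
  have hP' : (A' * U) * (A' * U)ᴴ = 1 := by
    rw [conjTranspose_mul, Matrix.mul_assoc, ← Matrix.mul_assoc U Uᴴ _, hU1,
      Matrix.one_mul, hA']
  have hQ' : (B' * V) * (B' * V)ᴴ = 1 := by
    rw [conjTranspose_mul, Matrix.mul_assoc, ← Matrix.mul_assoc V Vᴴ _, hV1,
      Matrix.one_mul, hB']
  exact upper_bound hr σ hσnonneg hσanti (A' * U) (B' * V) hP' hQ'
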